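/- Let f(z) = 2/(1 − e^{−2z}) on the domain where e^{−2z} ≠ 1. Then f(z) − 1 = (1 + e^{−2z})/(1 − e^{−2z}) and f'(z) − 1 = −(1 + e^{−2z})²/(1 − e^{−2z})² identically, so f and f' share the value 1 IM (same zero set: e^{−2z} = −1), but f' ≢ f. -/

import Mathlib

open Complex

lemma aux_deriv (f : ℂ → ℂ)
    (hf : ∀ z : ℂ, f z = 2 / (1 - exp (-(2 * z))))
    (z : ℂ) (hz : exp (-(2 * z)) ≠ 1) :
    deriv f z = -4 * exp (-(2 * z)) / (1 - exp (-(2 * z))) ^ 2 := by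
  have hfe : f = fun z => 2 / (1 - exp (-(2 * z))) := funext hf
  have hd : 1 - exp (-(2 * z)) ≠ 0 := sub_ne_zero.mpr (Ne.symm hz)
  have hg : HasDerivAt (fun z : ℂ => 1 - exp (-(2 * z))) (2 * exp (-(2 * z))) z := by
    have h1 : HasDerivAt (fun z : ℂ => -(2 * z)) (-2) z := by
      simpa using ((hasDerivAt_id z).const_mul (2 : ℂ)).fun_neg
    have := (h1.cexp).const_sub 1
    rw [show (2 * exp (-(2 * z))) = -(exp (-(2 * z)) * -2) by ring]
    exact this
  have h : HasDerivAt f ((0 * (1 - exp (-(2 * z))) - 2 * (2 * exp (-(2 * z)))) /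
      (1 - exp (-(2 * z))) ^ 2) z := by
    rw [hfe]
    exact (hasDerivAt_const z (2 : ℂ)).div hg hd
  rw [h.deriv]
  ring

theorem stmt_14 (f : ℂ → ℂ)
    (hf : ∀ z : ℂ, f z = 2 / (1 - exp (-(2 * z)))) :
    (∀ z : ℂ, exp (-(2 * z)) ≠ 1 →
      f z - 1 = (1 + exp (-(2 * z))) / (1 - exp (-(2 * z))) ∧
      deriv f z - 1 = -((1 + exp (-(2 * z))) ^ 2 / (1 - exp (-(2 * z))) ^ 2)) ∧
    ¬∀ z : ℂ, exp (-(2 * z)) ≠ 1 → deriv f z = f z := by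
  constructor
  · intro z hz
    have hd : 1 - exp (-(2 * z)) ≠ 0 := sub_ne_zero.mpr (Ne.symm hz)
    constructor
    · rw [hf z]; field_simp; ring
    · rw [aux_deriv f hf z hz]; field_simp; ring
  · intro h
    set z₀ : ℂ := -(Complex.log 2) / 2 with hz₀
    have he : exp (-(2 * z₀)) = 2 := by
      rw [hz₀]
      have : -(2 * (-(Complex.log 2) / 2)) = Complex.log 2 := by ring
      rw [this, Complex.exp_log (by norm_num)]
    have hz : exp (-(2 * z₀)) ≠ 1 := by rw [he]; norm_num
    have := h z₀ hz
    rw [aux_deriv f hf z₀ hz, hf z₀, he] at this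
    norm_num at this
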